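/- For a walk on a graph where the robot always moves to a neighbor minimizing visit frequency (LFV-v), after each step the multiset of neighbor frequencies of the current vertex u with frequency g contains at least (g mod δ) neighbors with frequency ≥ ⌊g/δ⌋ + 1 and all neighbors have frequency ≥ ⌊g/δ⌋, assuming this invariant holds inductively and δ = deg(u). -/
import Mathlib


/-- LFV-v invariant. Let `M` be the multiset of the `δ` neighbor
frequencies of the current vertex, whose own frequency is `g`. If at least `g % δ`
elements of `M` are `≥ g/δ + 1` and all elements are `≥ g/δ`, then after visiting a
minimum-frequency neighbor (replacing a minimum `m` by `m + 1`) and increasing `g`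
by one, the invariant still holds. -/
theorem lfv_neighbor_invariant (g δ : ℕ) (hδ : 1 ≤ δ)
    (M : Multiset ℕ) (hcard : Multiset.card M = δ)
    (hmany : g % δ ≤ Multiset.card (M.filter (fun x => g / δ + 1 ≤ x)))
    (hall : ∀ x ∈ M, g / δ ≤ x)
    (m : ℕ) (hm : m ∈ M) (hmin : ∀ x ∈ M, m ≤ x) :
    (g + 1) % δ ≤
        Multiset.card (((m + 1) ::ₘ M.erase m).filter (fun x => (g + 1) / δ + 1 ≤ x)) ∧
      ∀ x ∈ (m + 1) ::ₘ M.erase m, (g + 1) / δ ≤ x := by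
  have hq := Nat.div_add_mod g δ
  have hr : g % δ < δ := Nat.mod_lt _ hδ
  have hcard' : Multiset.card (M.erase m) = δ - 1 := by
    rw [Multiset.card_erase_of_mem hm, hcard]; rfl
  have hmq : g / δ ≤ m := hall m hm
  have hMe : M = m ::ₘ M.erase m := (Multiset.cons_erase hm).symm
  rcases Nat.lt_or_ge (g % δ + 1) δ with hcase | hcase
  · -- (g+1)/δ = g/δ, (g+1)%δ = g%δ + 1
    have hg1 : g + 1 = δ * (g / δ) + (g % δ + 1) := by omega
    have hdiv : (g + 1) / δ = g / δ := by
      rw [hg1, Nat.mul_add_div hδ, Nat.div_eq_of_lt hcase, add_zero]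
    have hmod : (g + 1) % δ = g % δ + 1 := by
      rw [hg1, Nat.mul_add_mod, Nat.mod_eq_of_lt hcase]
    rw [hdiv, hmod]
    constructor
    · rw [Multiset.filter_cons_of_pos _ (by simp; omega), Multiset.card_cons]
      rcases Nat.lt_or_ge m (g / δ + 1) with hmlt | hmge
      · have hfe : M.filter (fun x => g / δ + 1 ≤ x)
            = (M.erase m).filter (fun x => g / δ + 1 ≤ x) := by
          conv_lhs => rw [hMe]
          rw [Multiset.filter_cons_of_neg _ (by simp; omega)]
        rw [hfe] at hmany
        omega
      · have hfe : (M.erase m).filter (fun x => g / δ + 1 ≤ x) = M.erase m :=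
          Multiset.filter_eq_self.mpr (fun x hx =>
            le_trans hmge (hmin x (Multiset.mem_of_mem_erase hx)))
        rw [hfe, hcard']
        omega
    · intro x hx
      rcases Multiset.mem_cons.mp hx with h | h
      · omega
      · exact hall x (Multiset.mem_of_mem_erase h)
  · -- g % δ = δ - 1, so (g+1)/δ = g/δ + 1, (g+1)%δ = 0
    have hcase' : g % δ + 1 = δ := by omega
    have hg1 : g + 1 = δ * (g / δ + 1) := by rw [Nat.mul_succ]; omega
    have hdiv : (g + 1) / δ = g / δ + 1 := by
      rw [hg1, Nat.mul_div_cancel_left _ hδ]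
    have hmod : (g + 1) % δ = 0 := by rw [hg1, Nat.mul_mod_right]
    rw [hdiv, hmod]
    refine ⟨Nat.zero_le _, ?_⟩
    intro x hx
    rcases Nat.lt_or_ge m (g / δ + 1) with hmlt | hmge
    · -- m = g/δ ; the erase part consists exactly of the filtered elements
      have hfe : M.filter (fun x => g / δ + 1 ≤ x)
          = (M.erase m).filter (fun x => g / δ + 1 ≤ x) := by
        conv_lhs => rw [hMe]
        rw [Multiset.filter_cons_of_neg _ (by simp; omega)]
      rw [hfe] at hmany
      have hle : (M.erase m).filter (fun x => g / δ + 1 ≤ x) ≤ M.erase m :=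
        Multiset.filter_le _ _
      have heq : (M.erase m).filter (fun x => g / δ + 1 ≤ x) = M.erase m :=
        Multiset.eq_of_le_of_card_le hle (by omega)
      rcases Multiset.mem_cons.mp hx with h | h
      · omega
      · rw [← heq] at h
        simpa using (Multiset.of_mem_filter h)
    · rcases Multiset.mem_cons.mp hx with h | h
      · omega
      · have := hmin x (Multiset.mem_of_mem_erase h)
        omega
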